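/- Let X be a real n×p matrix whose columns are linearly independent, Y ∈ ℝⁿ, λ ≥ 0, let C be a p×p real diagonal matrix with diagonal entries in {−1, 0, 1}, set S := C Xᵀ X C, let S⁻ satisfy the four Penrose equations for S with S S⁻ = S⁻ S = C², and put û := S⁻ (C Xᵀ Y − λ C² 𝟙). Then the minimal value of the orthant lasso criterion admits the closed form L_C(û) = ½ ( Yᵀ Y − Yᵀ X C S⁻ C Xᵀ Y + 2λ Yᵀ X C S⁻ 𝟙 − λ² 𝟙ᵀ S⁻ 𝟙 ), where L_C(u) = ½ Yᵀ Y − uᵀ C Xᵀ Y + ½ uᵀ C Xᵀ X C u + λ uᵀ C² 𝟙. -/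
import Mathlib


open Matrix BigOperators

/-- `B` is a Moore–Penrose generalized inverse of `A`:
the four Penrose equations hold. -/
def IsMoorePenrose {p : ℕ} (A B : Matrix (Fin p) (Fin p) ℝ) : Prop :=
  A * B * A = A ∧ B * A * B = B ∧ (A * B)ᵀ = A * B ∧ (B * A)ᵀ = B * A

/-- `(A *ᵥ x) ⬝ᵥ y = x ⬝ᵥ (Aᵀ *ᵥ y)`. -/
lemma mulVec_dp {m n : ℕ} (A : Matrix (Fin m) (Fin n) ℝ) (x : Fin n → ℝ) (y : Fin m → ℝ) :
    A.mulVec x ⬝ᵥ y = x ⬝ᵥ Aᵀ.mulVec y := by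
  rw [Matrix.dotProduct_mulVec, Matrix.vecMul_transpose, dotProduct_comm]

theorem orthant_lasso_optimal_value {n p : ℕ}
    (X : Matrix (Fin n) (Fin p) ℝ)
    (hX : LinearIndependent ℝ (fun j : Fin p => fun i : Fin n => X i j))
    (Y : Fin n → ℝ) (lam : ℝ) (hlam : 0 ≤ lam)
    (C : Matrix (Fin p) (Fin p) ℝ) (hdiag : C.IsDiag)
    (hent : ∀ i, C i i = -1 ∨ C i i = 0 ∨ C i i = 1)
    (Sinv : Matrix (Fin p) (Fin p) ℝ)
    (hMP : IsMoorePenrose (C * Xᵀ * X * C) Sinv)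
    (hleft : (C * Xᵀ * X * C) * Sinv = C * C)
    (hright : Sinv * (C * Xᵀ * X * C) = C * C)
    (uhat : Fin p → ℝ)
    (huhat : uhat = Sinv.mulVec ((C * Xᵀ).mulVec Y - lam • (C * C).mulVec (fun _ => (1 : ℝ))))
    (LC : (Fin p → ℝ) → ℝ)
    (hLC : ∀ u, LC u = (1 / 2) * (Y ⬝ᵥ Y) - u ⬝ᵥ ((C * Xᵀ).mulVec Y)
        + (1 / 2) * (u ⬝ᵥ (C * Xᵀ * X * C).mulVec u)
        + lam * (u ⬝ᵥ (C * C).mulVec (fun _ => (1 : ℝ)))) :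
    LC uhat = (1 / 2) * (Y ⬝ᵥ Y
        - Y ⬝ᵥ (X * C * Sinv * C * Xᵀ).mulVec Y
        + 2 * lam * (Y ⬝ᵥ (X * C * Sinv).mulVec (fun _ => (1 : ℝ)))
        - lam ^ 2 * ((fun _ => (1 : ℝ)) ⬝ᵥ Sinv.mulVec (fun _ => (1 : ℝ)))) := by
  obtain ⟨hP1, hP2, hP3, hP4⟩ := hMP
  set S : Matrix (Fin p) (Fin p) ℝ := C * Xᵀ * X * C with hS
  -- C is symmetric
  have hCsym : Cᵀ = C := hdiag.isSymm
  -- C³ = C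
  have hC3 : C * C * C = C := by
    have hd : (fun i => C.diag i * C.diag i * C.diag i) = C.diag := by
      funext i
      rcases hent i with h | h | h <;>
        · simp only [Matrix.diag_apply, h]; norm_num
    calc C * C * C
        = Matrix.diagonal C.diag * Matrix.diagonal C.diag * Matrix.diagonal C.diag := by
          rw [hdiag.diagonal_diag]
      _ = Matrix.diagonal (fun i => C.diag i * C.diag i * C.diag i) := by
          rw [Matrix.diagonal_mul_diagonal, Matrix.diagonal_mul_diagonal]
      _ = Matrix.diagonal C.diag := by rw [hd]
      _ = C := hdiag.diagonal_diag
  have hC4 : (C * C) * (C * C) = C * C := by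
    calc (C * C) * (C * C) = (C * C * C) * C := by rw [mul_assoc (C*C) C C]
      _ = C * C := by rw [hC3]
  -- S is symmetric
  have hSsym : Sᵀ = S := by
    rw [hS]
    simp only [Matrix.transpose_mul, Matrix.transpose_transpose, hCsym, Matrix.mul_assoc]
  -- Sinv * C² = Sinv and C² * Sinv = Sinv
  have hSinvC2 : Sinv * (C * C) = Sinv := by
    calc Sinv * (C * C) = Sinv * (S * Sinv) := by rw [hleft]
      _ = Sinv * S * Sinv := (mul_assoc Sinv S Sinv).symm
      _ = Sinv := hP2
  have hC2Sinv : (C * C) * Sinv = Sinv := by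
    calc (C * C) * Sinv = (Sinv * S) * Sinv := by rw [hright]
      _ = Sinv * S * Sinv := rfl
      _ = Sinv := hP2
  -- Sinv is symmetric
  have hSinvsym : Sinvᵀ = Sinv := by
    have h1 : Sinvᵀ * S = C * C := by
      have h := congrArg Matrix.transpose hleft
      rwa [Matrix.transpose_mul, hSsym, Matrix.transpose_mul, hCsym] at h
    have h2 : Sinvᵀ * (C * C) = Sinvᵀ := by
      have h := congrArg Matrix.transpose hC2Sinv
      rwa [Matrix.transpose_mul, Matrix.transpose_mul, hCsym] at h
    calc Sinvᵀ = Sinvᵀ * (C * C) := h2.symm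
      _ = Sinvᵀ * (S * Sinv) := by rw [hleft]
      _ = (Sinvᵀ * S) * Sinv := (mul_assoc Sinvᵀ S Sinv).symm
      _ = (C * C) * Sinv := by rw [h1]
      _ = Sinv := hC2Sinv
  -- abbreviations
  set one : Fin p → ℝ := (fun _ => (1 : ℝ)) with hone
  set v : Fin p → ℝ := (C * Xᵀ).mulVec Y with hv
  set w : Fin p → ℝ := (C * C).mulVec one with hw
  set z : Fin p → ℝ := v - lam • w with hz
  -- C² fixes v and w
  have hC2v : (C * C).mulVec v = v := by
    rw [hv, Matrix.mulVec_mulVec, ← Matrix.mul_assoc, hC3]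
  have hC2w : (C * C).mulVec w = w := by
    rw [hw, Matrix.mulVec_mulVec, hC4]
  -- S * uhat = z
  have hSu : S.mulVec uhat = z := by
    rw [huhat, Matrix.mulVec_mulVec, hleft]
    rw [hz, Matrix.mulVec_sub, Matrix.mulVec_smul, hC2v, hC2w]
  -- Sinv w = Sinv 1
  have hSw : Sinv.mulVec w = Sinv.mulVec one := by
    rw [hw, Matrix.mulVec_mulVec, hSinvC2]
  -- scalars
  set a : ℝ := v ⬝ᵥ Sinv.mulVec v with ha
  set b : ℝ := v ⬝ᵥ Sinv.mulVec one with hb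
  set c : ℝ := one ⬝ᵥ Sinv.mulVec one with hc
  have hwSx : ∀ x : Fin p → ℝ, w ⬝ᵥ Sinv.mulVec x = one ⬝ᵥ Sinv.mulVec x := by
    intro x
    rw [hw, mulVec_dp, Matrix.transpose_mul, hCsym, Matrix.mulVec_mulVec, hC2Sinv]
  have hsym1 : one ⬝ᵥ Sinv.mulVec v = b := by
    rw [dotProduct_comm, mulVec_dp, hSinvsym, hb]
  -- uhat ⬝ v and uhat ⬝ w
  have huv : uhat ⬝ᵥ v = a - lam * b := by
    rw [huhat, mulVec_dp, hSinvsym, hz, sub_dotProduct, smul_dotProduct, smul_eq_mul,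
      hwSx v, hsym1, ← ha]
  have huw : uhat ⬝ᵥ w = b - lam * c := by
    rw [huhat, mulVec_dp, hSinvsym, hSw, hz, sub_dotProduct, smul_dotProduct, smul_eq_mul,
      hwSx one, ← hb, ← hc]
  -- RHS terms
  have hN : (X * C)ᵀ = C * Xᵀ := by rw [Matrix.transpose_mul, hCsym]
  have hT1 : Y ⬝ᵥ (X * C * Sinv * C * Xᵀ).mulVec Y = a := by
    have hM : X * C * Sinv * C * Xᵀ = (X * C) * (Sinv * (C * Xᵀ)) := by
      simp only [Matrix.mul_assoc]
    rw [hM, ← Matrix.mulVec_mulVec Y (X * C) (Sinv * (C * Xᵀ)),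
      ← Matrix.mulVec_mulVec Y Sinv (C * Xᵀ), ← hv, dotProduct_comm,
      mulVec_dp, hN, ← hv, mulVec_dp, hSinvsym, ← ha]
  have hT2 : Y ⬝ᵥ (X * C * Sinv).mulVec one = b := by
    rw [← Matrix.mulVec_mulVec, dotProduct_comm, mulVec_dp, hN, ← hv,
      mulVec_dp, hSinvsym, hsym1]
  -- conclude
  have huz : uhat ⬝ᵥ z = (a - lam * b) - lam * (b - lam * c) := by
    rw [hz, dotProduct_sub, dotProduct_smul, smul_eq_mul, huv, huw]
  rw [hLC uhat, hSu, hT1, hT2, huz, huv, huw]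
  ring
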